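/- Let L be a field and let f be a formal power series in L[[x]] not divisible by x. Let u, s be positive integers such that s is not a multiple of the characteristic of L. If g is an element of L[[x^{1/u}]] (i.e., a power series in the variable x^{1/u}) with g^s = f, then g lies in L[[x]], i.e., all coefficients of g at fractional powers of x vanish. -/

import Mathlib

open PowerSeries

private lemma aux_mul_supp {L : Type*} [CommRing L] (u : ℕ) (a b : PowerSeries L)
    (ha : ∀ m, ¬ u ∣ m → PowerSeries.coeff m a = 0)
    (hb : ∀ m, ¬ u ∣ m → PowerSeries.coeff m b = 0) :
    ∀ m, ¬ u ∣ m → PowerSeries.coeff m (a * b) = 0 := by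
  intro m hm
  rw [PowerSeries.coeff_mul]
  apply Finset.sum_eq_zero
  intro p hp
  rw [Finset.HasAntidiagonal.mem_antidiagonal] at hp
  by_cases h1 : u ∣ p.1
  · have h2 : ¬ u ∣ p.2 := fun h2 => hm (hp ▸ Nat.dvd_add h1 h2)
    rw [hb _ h2, mul_zero]
  · rw [ha _ h1, zero_mul]

private lemma aux_pow_supp {L : Type*} [CommRing L] (u : ℕ) (a : PowerSeries L)
    (ha : ∀ m, ¬ u ∣ m → PowerSeries.coeff m a = 0) (k : ℕ) :
    ∀ m, ¬ u ∣ m → PowerSeries.coeff m (a ^ k) = 0 := by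
  induction k with
  | zero =>
    intro m hm
    have hm0 : m ≠ 0 := fun h => hm (h ▸ dvd_zero u)
    rw [pow_zero, PowerSeries.coeff_one]
    simp [hm0]
  | succ k ih =>
    intro m hm
    rw [pow_succ]
    exact aux_mul_supp u _ _ ih ha m hm

private lemma aux_pow_low {L : Type*} [CommRing L] (n : ℕ) (z : PowerSeries L)
    (hz : ∀ m < n, PowerSeries.coeff m z = 0) (k : ℕ) (hk : 0 < k) :
    ∀ m < n, PowerSeries.coeff m (z ^ k) = 0 := by
  induction k with
  | zero => omega
  | succ k ih =>
    intro m hm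
    rcases Nat.eq_zero_or_pos k with hk0 | hk0
    · subst hk0; simpa using hz m hm
    · rw [pow_succ, PowerSeries.coeff_mul]
      apply Finset.sum_eq_zero
      intro p hp
      rw [Finset.HasAntidiagonal.mem_antidiagonal] at hp
      have : p.2 < n := by omega
      rw [hz _ this, mul_zero]

private lemma aux_pow_low2 {L : Type*} [CommRing L] (n : ℕ) (hn : 0 < n) (z : PowerSeries L)
    (hz : ∀ m < n, PowerSeries.coeff m z = 0) (k : ℕ) (hk : 2 ≤ k) :
    ∀ m ≤ n, PowerSeries.coeff m (z ^ k) = 0 := by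
  intro m hm
  obtain ⟨j, rfl⟩ : ∃ j, k = j + 1 := ⟨k - 1, by omega⟩
  rw [pow_succ, PowerSeries.coeff_mul]
  apply Finset.sum_eq_zero
  intro p hp
  rw [Finset.HasAntidiagonal.mem_antidiagonal] at hp
  by_cases h1 : p.2 < n
  · rw [hz _ h1, mul_zero]
  · have hp1 : p.1 < n := by omega
    rw [aux_pow_low n z hz j (by omega) p.1 hp1, zero_mul]

/-- Let `L` be a field and `f ∈ L[[x]]` not divisible by `x` (i.e. with
nonzero constant coefficient).  Let `u, s` be positive integers with `char L ∤ s`.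
We model `L[[x^{1/u}]]` as power series in the variable `z = x^{1/u}`, so that an element
of `L[[x]]` corresponds to a series supported on exponents divisible by `u`.
If `g ∈ L[[x^{1/u}]]` satisfies `g^s = f`, then `g ∈ L[[x]]`, i.e. all coefficients of `g`
at fractional powers of `x` vanish. -/
theorem stmt_0 (L : Type*) [Field L] (f g : PowerSeries L)
    (hf : PowerSeries.constantCoeff f ≠ 0)
    (u s : ℕ) (hu : 0 < u) (hs : 0 < s)
    (hchar : ¬ (ringChar L ∣ s))
    (hroot : ∀ n : ℕ, PowerSeries.coeff n (g ^ s) =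
      if u ∣ n then PowerSeries.coeff (n / u) f else 0) :
    ∀ n : ℕ, ¬ u ∣ n → PowerSeries.coeff n g = 0 := by
  have hsL : (s : L) ≠ 0 := by
    intro h
    exact hchar ((CharP.cast_eq_zero_iff L (ringChar L) s).mp h)
  have hc0 : PowerSeries.constantCoeff g ≠ 0 := by
    intro h0
    have h := hroot 0
    simp only [if_pos (dvd_zero u), Nat.zero_div] at h
    rw [PowerSeries.coeff_zero_eq_constantCoeff, map_pow, h0, zero_pow hs.ne'] at h
    exact hf h.symm
  intro n
  induction n using Nat.strong_induction_on with
  | _ n ih =>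
    intro hn
    have hn1 : 0 < n := Nat.pos_of_ne_zero (fun h => hn (h ▸ dvd_zero u))
    set t : PowerSeries L :=
      PowerSeries.mk (fun m => if m < n then PowerSeries.coeff m g else 0) with ht
    set z : PowerSeries L := g - t with hzdef
    have htm : ∀ m, PowerSeries.coeff m t =
        if m < n then PowerSeries.coeff m g else 0 := fun m => PowerSeries.coeff_mk m _
    have hzc : ∀ m < n, PowerSeries.coeff m z = 0 := by
      intro m hm
      rw [hzdef, map_sub, htm, if_pos hm, sub_self]
    have hzn : PowerSeries.coeff n z = PowerSeries.coeff n g := by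
      rw [hzdef, map_sub, htm, if_neg (lt_irrefl n), sub_zero]
    have htc : ∀ m, ¬ u ∣ m → PowerSeries.coeff m t = 0 := by
      intro m hm
      rw [htm]
      split
      · exact ih m ‹m < n› hm
      · rfl
    have ht0 : PowerSeries.constantCoeff t = PowerSeries.constantCoeff g := by
      rw [← PowerSeries.coeff_zero_eq_constantCoeff, htm, if_pos hn1,
        PowerSeries.coeff_zero_eq_constantCoeff]
    have hg : g = z + t := by rw [hzdef]; ring
    have key : PowerSeries.coeff n (g ^ s) =
        (s : L) * (PowerSeries.constantCoeff g) ^ (s - 1) * PowerSeries.coeff n g := by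
      rw [hg, add_pow, map_sum, Finset.sum_eq_single 1]
      · rw [pow_one, Nat.choose_one_right]
        have hcast : ((s : ℕ) : PowerSeries L) = PowerSeries.C (s : L) :=
          (map_natCast (PowerSeries.C (R := L)) s).symm
        rw [hcast, PowerSeries.coeff_mul_C, mul_comm z (t ^ (s - 1)), PowerSeries.coeff_mul,
          Finset.sum_eq_single (0, n)]
        · rw [PowerSeries.coeff_zero_eq_constantCoeff, map_pow, ht0, hzn, ← hg]
          ring
        · intro p hp hne
          rw [Finset.HasAntidiagonal.mem_antidiagonal] at hp
          have : p.2 < n := by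
            rcases Nat.lt_or_ge p.2 n with h | h
            · exact h
            · exfalso
              have : p.2 = n := by omega
              have : p.1 = 0 := by omega
              exact hne (by ext <;> simp [*])
          rw [hzc _ this, mul_zero]
        · intro h
          exact absurd (Finset.HasAntidiagonal.mem_antidiagonal.mpr (by simp)) h
      · intro k hk hne
        rcases Nat.eq_zero_or_pos k with rfl | hk0
        · rw [pow_zero, one_mul, Nat.choose_zero_right, Nat.cast_one, mul_one, Nat.sub_zero]
          exact aux_pow_supp u t htc s n hn
        · have hk2 : 2 ≤ k := by omega
          rw [mul_assoc, PowerSeries.coeff_mul]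
          apply Finset.sum_eq_zero
          intro p hp
          rw [Finset.HasAntidiagonal.mem_antidiagonal] at hp
          rw [aux_pow_low2 n hn1 z hzc k hk2 p.1 (by omega), zero_mul]
      · intro h
        exact absurd (Finset.mem_range.mpr (by omega)) h
    have hzero : PowerSeries.coeff n (g ^ s) = 0 := by
      rw [hroot n, if_neg hn]
    rw [key] at hzero
    have hne : (s : L) * (PowerSeries.constantCoeff g) ^ (s - 1) ≠ 0 :=
      mul_ne_zero hsL (pow_ne_zero _ hc0)
    exact (mul_eq_zero.mp hzero).resolve_left hne
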